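/- Let z ∈ ℂ with Im z > 0 and |z-1|² = |z|. Define the face-pairing maps z₁(u) = (conj(u) - 1)/(conj(z) - 1) and z₂(u) = conj(u)·z/(conj(u) - conj(z)·(1-z)) on ℂ. Then for every u ∈ ℂ for which all occurring denominators are nonzero, z₂(z₂(z₁(z₁(u)))) = z₁(z₂(u)); that is, the face-pairing maps satisfy the Gieseking cycle relation z₁z₁z₂z₂z₁⁻¹z₂⁻¹ = 1. -/

import Mathlib

open Complex

private lemma frac_step (x d c t : ℂ) (hd : d ≠ 0) :
    x / d * t / (x / d - c) = x * t / (x - c * d) := by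
  rw [div_sub' hd, div_div_eq_mul_div, mul_comm d c]
  congr 1
  field_simp

/-- The face-pairing map `z₁` of the ideal simplex with vertices `0, 1, z, ∞`. -/
noncomputable def gieseking_z1 (z u : ℂ) : ℂ :=
  ((starRingEnd ℂ) u - 1) / ((starRingEnd ℂ) z - 1)

/-- The face-pairing map `z₂` of the ideal simplex with vertices `0, 1, z, ∞`. -/
noncomputable def gieseking_z2 (z u : ℂ) : ℂ :=
  (starRingEnd ℂ) u * z / ((starRingEnd ℂ) u - (starRingEnd ℂ) z * (1 - z))

/-- The Gieseking cycle relation `z₁z₁z₂z₂z₁⁻¹z₂⁻¹ = 1`, i.e.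
`z₂(z₂(z₁(z₁(u)))) = z₁(z₂(u))` wherever all occurring denominators are nonzero. -/
theorem gieseking_cycle_relation (z : ℂ) (hIm : 0 < z.im)
    (hz : ‖z - 1‖ ^ 2 = ‖z‖) :
    ∀ u : ℂ,
      (starRingEnd ℂ) z - 1 ≠ 0 →
      (starRingEnd ℂ) u - (starRingEnd ℂ) z * (1 - z) ≠ 0 →
      (starRingEnd ℂ) (gieseking_z1 z (gieseking_z1 z u)) -
        (starRingEnd ℂ) z * (1 - z) ≠ 0 →
      (starRingEnd ℂ) (gieseking_z2 z (gieseking_z1 z (gieseking_z1 z u))) -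
        (starRingEnd ℂ) z * (1 - z) ≠ 0 →
      gieseking_z2 z (gieseking_z2 z (gieseking_z1 z (gieseking_z1 z u))) =
        gieseking_z1 z (gieseking_z2 z u) := by
  intro u hw1 hd2 hd3 hd4
  have hz0 : z ≠ 0 := by
    intro h; rw [h] at hIm; simp at hIm
  have hw0 : (starRingEnd ℂ) z ≠ 0 := by simpa using hz0
  have hz1 : z - 1 ≠ 0 := by
    intro h
    apply hw1
    rw [sub_eq_zero] at h ⊢
    rw [h, map_one]
  -- the key algebraic relation coming from |z-1|^2 = |z|
  have key : ((z - 1) * ((starRingEnd ℂ) z - 1)) ^ 2 = z * (starRingEnd ℂ) z := by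
    have h3 : Complex.normSq (z - 1) ^ 2 = Complex.normSq z := by
      rw [← Complex.sq_norm, ← Complex.sq_norm, hz]
    have h4 := congrArg (fun r : ℝ => (r : ℂ)) h3
    push_cast at h4
    rw [← Complex.mul_conj, ← Complex.mul_conj] at h4
    simp only [map_sub, map_one] at h4
    exact h4
  -- step: z1 (z1 u)
  have hA : gieseking_z1 z (gieseking_z1 z u)
      = (u - z) / ((z - 1) * ((starRingEnd ℂ) z - 1)) := by
    simp only [gieseking_z1, map_div₀, map_sub, map_one, Complex.conj_conj]
    field_simp
    ring
  -- N1 ≠ 0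
  have hN1 : (starRingEnd ℂ) u - (starRingEnd ℂ) z
      - (starRingEnd ℂ) z * (1 - z) * (((starRingEnd ℂ) z - 1) * (z - 1)) ≠ 0 := by
    intro h
    apply hd3
    rw [hA]
    simp only [map_div₀, map_sub, map_mul, map_one, Complex.conj_conj]
    rw [div_sub' (mul_ne_zero hw1 hz1), div_eq_zero_iff]
    left
    linear_combination h
  have hN1c : u - z - z * (1 - (starRingEnd ℂ) z) * ((z - 1) * ((starRingEnd ℂ) z - 1)) ≠ 0 := by
    intro h
    apply hN1
    have h5 := congrArg (starRingEnd ℂ) h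
    simp only [map_sub, map_mul, map_one, map_zero, Complex.conj_conj] at h5
    linear_combination h5
  -- step: z2 (z1 (z1 u))
  have hB : gieseking_z2 z (gieseking_z1 z (gieseking_z1 z u))
      = ((starRingEnd ℂ) u - (starRingEnd ℂ) z) * z /
        ((starRingEnd ℂ) u - (starRingEnd ℂ) z
          - (starRingEnd ℂ) z * (1 - z) * (((starRingEnd ℂ) z - 1) * (z - 1))) := by
    rw [gieseking_z2, hA]
    simp only [map_div₀, map_sub, map_mul, map_one, Complex.conj_conj]
    rw [frac_step _ _ _ _ (mul_ne_zero hw1 hz1)]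
  -- N2 ≠ 0
  have hN2 : (starRingEnd ℂ) z * (u - z)
      - (starRingEnd ℂ) z * (1 - z) *
        (u - z - z * (1 - (starRingEnd ℂ) z) * ((z - 1) * ((starRingEnd ℂ) z - 1))) ≠ 0 := by
    intro h
    apply hd4
    rw [hB]
    simp only [map_div₀, map_sub, map_mul, map_one, Complex.conj_conj]
    rw [div_sub' hN1c, div_eq_zero_iff]
    left
    linear_combination h
  -- LHS as a single fraction
  have hL : gieseking_z2 z (gieseking_z2 z (gieseking_z1 z (gieseking_z1 z u)))
      = (starRingEnd ℂ) z * (u - z) * z /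
        ((starRingEnd ℂ) z * (u - z)
          - (starRingEnd ℂ) z * (1 - z) *
            (u - z - z * (1 - (starRingEnd ℂ) z) * ((z - 1) * ((starRingEnd ℂ) z - 1)))) := by
    rw [gieseking_z2, hB]
    simp only [map_div₀, map_sub, map_mul, map_one, Complex.conj_conj]
    rw [show ((u - z) * (starRingEnd ℂ) z) = ((starRingEnd ℂ) z * (u - z)) by ring]
    rw [frac_step _ _ _ _ hN1c]
  -- conj of the hd2 denominator is nonzero
  have hd2c : u - z * (1 - (starRingEnd ℂ) z) ≠ 0 := by
    intro h
    apply hd2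
    have h5 := congrArg (starRingEnd ℂ) h
    simp only [map_sub, map_mul, map_one, map_zero, Complex.conj_conj] at h5
    linear_combination h5
  -- RHS as a single fraction
  have hR : gieseking_z1 z (gieseking_z2 z u)
      = (u - z) / (u - z * (1 - (starRingEnd ℂ) z)) := by
    rw [gieseking_z1, gieseking_z2]
    simp only [map_div₀, map_sub, map_mul, map_one, Complex.conj_conj]
    field_simp
    ring
  rw [hL, hR, div_eq_div_iff hN2 hd2c]
  linear_combination (-(z * (starRingEnd ℂ) z * (u - z))) * key
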